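/- The volume of a sum-rank-metric sphere of radius t satisfies Vol_{S_ℓ}(t) ≥ q^{(m+η-t/ℓ)t - ℓ/4} · γ_q^{-ℓ}, and hence the same lower bound holds for the ball volume Vol_{B_ℓ}(t). -/

import Mathlib

/-- `γ_q = ∏_{i=1}^∞ (1 - q^{-i})^{-1}`. -/
noncomputable def gammaq (q : ℕ) : ℝ := ∏' i : ℕ, (1 - (q : ℝ)⁻¹ ^ (i + 1))⁻¹

/-- Rank weight of a block `v ∈ Fqm^η`: the `Fq`-dimension of the span of its entries. -/
noncomputable def rkw (Fq : Type) {Fqm : Type} [Field Fq] [Field Fqm] [Algebra Fq Fqm]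
    {η : ℕ} (v : Fin η → Fqm) : ℕ :=
  Module.finrank Fq (Submodule.span Fq (Set.range v))

/-- Sum-rank weight of a vector in `Fqm^(ℓη)`, given as `ℓ` blocks of length `η`. -/
noncomputable def srw (Fq : Type) {Fqm : Type} [Field Fq] [Field Fqm] [Algebra Fq Fqm]
    {ℓ η : ℕ} (x : Fin ℓ → Fin η → Fqm) : ℕ :=
  ∑ i, rkw Fq (x i)

/-- Number of vectors in `Fqm^(ℓη)` of sum-rank weight exactly `t`. -/
noncomputable def VolS (Fq Fqm : Type) [Field Fq] [Field Fqm] [Algebra Fq Fqm]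
    (ℓ η t : ℕ) : ℕ :=
  Nat.card {x : Fin ℓ → Fin η → Fqm // srw Fq x = t}

/-- Number of vectors in `Fqm^(ℓη)` of sum-rank weight at most `t`. -/
noncomputable def VolB (Fq Fqm : Type) [Field Fq] [Field Fqm] [Algebra Fq Fqm]
    (ℓ η t : ℕ) : ℕ :=
  Nat.card {x : Fin ℓ → Fin η → Fqm // srw Fq x ≤ t}



lemma xq_mem {q : ℕ} (hq2 : 2 ≤ q) (j : ℕ) : 0 < 1 - (q : ℝ)⁻¹ ^ (j + 1) ∧ (q : ℝ)⁻¹ ^ (j + 1) ≤ 2⁻¹ := by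
  have hq0 : (0:ℝ) < q := by positivity
  have h1 : (q : ℝ)⁻¹ ≤ 2⁻¹ := by
    rw [inv_le_inv₀ hq0 (by norm_num)]
    exact_mod_cast hq2
  have h2 : (q : ℝ)⁻¹ ^ (j + 1) ≤ (q : ℝ)⁻¹ ^ 1 := by
    apply pow_le_pow_of_le_one (by positivity) (by linarith) (by omega)
  constructor
  · nlinarith
  · calc (q : ℝ)⁻¹ ^ (j + 1) ≤ (q : ℝ)⁻¹ ^ 1 := h2
      _ ≤ 2⁻¹ := by simpa using h1

lemma gamma_multipliable {q : ℕ} (hq2 : 2 ≤ q) : Multipliable (fun j : ℕ => (1 - (q : ℝ)⁻¹ ^ (j + 1))⁻¹) := by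
  have hq0 : (0:ℝ) < q := by positivity
  apply Real.multipliable_of_summable_log
    (fun j => by have := (xq_mem hq2 j).1; positivity)
  have hb : ∀ j : ℕ, Real.log (1 - (q : ℝ)⁻¹ ^ (j + 1))⁻¹ ≤ 2 * (q:ℝ)⁻¹ ^ (j+1) := by
    intro j
    obtain ⟨h1, h2⟩ := xq_mem hq2 j
    set x := (q:ℝ)⁻¹ ^ (j+1) with hx
    have hinv : (1 - x)⁻¹ ≤ 1 + 2 * x := by
      rw [inv_le_iff_one_le_mul₀ h1]
      nlinarith [pow_nonneg (show (0:ℝ) ≤ (q:ℝ)⁻¹ by positivity) (j+1)]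
    calc Real.log (1 - x)⁻¹ ≤ (1 - x)⁻¹ - 1 := Real.log_le_sub_one_of_pos (by positivity)
      _ ≤ 2 * x := by linarith
  have hgeo : Summable (fun j : ℕ => 2 * (q:ℝ)⁻¹ ^ (j+1)) := by
    apply Summable.mul_left
    exact (summable_geometric_of_lt_one (by positivity) (by
      rw [inv_lt_one_iff₀]; right; exact_mod_cast by omega)).comp_injective (add_left_injective 1)
  refine Summable.of_nonneg_of_le (fun j => ?_) hb hgeo
  obtain ⟨h1, h2⟩ := xq_mem hq2 j
  apply Real.log_nonneg
  show 1 ≤ (1 - (q : ℝ)⁻¹ ^ (j + 1))⁻¹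
  rw [one_le_inv_iff₀]
  exact ⟨h1, by nlinarith [pow_nonneg (show (0:ℝ) ≤ (q:ℝ)⁻¹ by positivity) (j+1)]⟩


lemma prod_le_tprod_real {f : ℕ → ℝ} (F : Finset ℕ) (h1 : ∀ i, 1 ≤ f i)
    (hf : Multipliable f) : (∏ i ∈ F, f i) ≤ ∏' i, f i := by
  refine ge_of_tendsto hf.hasProd (Filter.eventually_atTop.2 ⟨F, fun s hFs => ?_⟩)
  rw [← Finset.prod_sdiff hFs]
  have h2 : (1:ℝ) ≤ ∏ i ∈ s \ F, f i := by
    calc (1:ℝ) = ∏ _i ∈ s \ F, (1:ℝ) := by simp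
    _ ≤ ∏ i ∈ s \ F, f i := Finset.prod_le_prod (by simp) (fun i _ => h1 i)
  have h3 : 0 < ∏ i ∈ F, f i := Finset.prod_pos (fun i _ => lt_of_lt_of_le one_pos (h1 i))
  nlinarith

lemma one_le_gfactor {q : ℕ} (hq2 : 2 ≤ q) (j : ℕ) : 1 ≤ (1 - (q : ℝ)⁻¹ ^ (j + 1))⁻¹ := by
  obtain ⟨h1, h2⟩ := xq_mem hq2 j
  rw [one_le_inv_iff₀]
  exact ⟨h1, by nlinarith [pow_nonneg (show (0:ℝ) ≤ (q:ℝ)⁻¹ by positivity) (j+1)]⟩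

lemma gamma_ge {q : ℕ} (hq2 : 2 ≤ q) {r m : ℕ} (hrm : r ≤ m) :
    (∏ i ∈ Finset.range r, (1 - (q : ℝ)⁻¹ ^ (m - i))⁻¹) ≤ gammaq q := by
  have key : (∏ j ∈ (Finset.range r).image (fun i => m - 1 - i),
      (1 - (q : ℝ)⁻¹ ^ (j + 1))⁻¹) ≤ gammaq q :=
    prod_le_tprod_real _ (one_le_gfactor hq2) (gamma_multipliable hq2)
  rw [Finset.prod_image (fun i hi i' hi' h => by
    simp only [Finset.mem_coe, Finset.mem_range] at hi hi'; omega)] at key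
  refine le_trans (le_of_eq ?_) key
  apply Finset.prod_congr rfl
  intro i hi
  simp only [Finset.mem_range] at hi
  have : m - 1 - i + 1 = m - i := by omega
  rw [this]

lemma gamma_pos {q : ℕ} (hq2 : 2 ≤ q) : 0 < gammaq q := by
  have := gamma_ge hq2 (le_refl 0)
  simpa using lt_of_lt_of_le one_pos (by simpa using this)


section count
variable {Fq Fqm : Type} [Field Fq] [Fintype Fq] [Field Fqm] [Fintype Fqm] [Algebra Fq Fqm]

lemma blockA (m η r : ℕ) (hfr : Module.finrank Fq Fqm = m) (hrm : r ≤ m) (hrη : r ≤ η) :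
    (∏ i ∈ Finset.range r, (Fintype.card Fq ^ m - Fintype.card Fq ^ i)) *
      (Fintype.card Fq ^ r) ^ (η - r) ≤ Nat.card {v : Fin η → Fqm // rkw Fq v = r} := by
  classical
  set S := fun s : {s : Fin r → Fqm // LinearIndependent Fq s} =>
    (Submodule.span Fq (Set.range s.val))
  -- the injection
  have hc : ∀ (s : {s : Fin r → Fqm // LinearIndependent Fq s})
      (w : Fin (η - r) → S s), rkw Fq (fun j : Fin η =>
        if h : (j : ℕ) < r then s.val ⟨j, h⟩ else (w ⟨(j : ℕ) - r, by omega⟩ : Fqm)) = r := by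
    intro s w
    set v := fun j : Fin η =>
      if h : (j : ℕ) < r then s.val ⟨j, h⟩ else (w ⟨(j : ℕ) - r, by omega⟩ : Fqm) with hv
    have hspan : Submodule.span Fq (Set.range v) = S s := by
      apply le_antisymm
      · rw [Submodule.span_le]
        rintro _ ⟨j, rfl⟩
        by_cases h : (j : ℕ) < r
        · simp only [hv, dif_pos h]
          exact Submodule.subset_span ⟨⟨j, h⟩, rfl⟩
        · simp only [hv, dif_neg h]
          exact (w ⟨(j : ℕ) - r, by omega⟩).2
      · rw [Submodule.span_le]
        rintro _ ⟨i, rfl⟩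
        apply Submodule.subset_span
        refine ⟨⟨(i : ℕ), by omega⟩, ?_⟩
        simp only [hv, dif_pos i.isLt]
    rw [rkw, hspan]
    simpa using finrank_span_eq_card s.2
  set e : (Σ s : {s : Fin r → Fqm // LinearIndependent Fq s}, (Fin (η - r) → S s)) →
      {v : Fin η → Fqm // rkw Fq v = r} :=
    fun p => ⟨fun j : Fin η =>
      if h : (j : ℕ) < r then p.1.val ⟨j, h⟩ else (p.2 ⟨(j : ℕ) - r, by omega⟩ : Fqm),
      hc p.1 p.2⟩ with he
  have hinj : Function.Injective e := by
    rintro ⟨s, w⟩ ⟨s', w'⟩ h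
    have hval := congrArg Subtype.val h
    have hs : s = s' := by
      apply Subtype.ext
      funext i
      have := congrFun hval ⟨(i : ℕ), lt_of_lt_of_le i.isLt hrη⟩
      simpa [he, dif_pos i.isLt] using this
    subst hs
    simp only [Sigma.mk.inj_iff, heq_eq_eq, true_and]
    funext j
    have hj : r + (j : ℕ) < η := by omega
    have := congrFun hval ⟨r + (j : ℕ), hj⟩
    have hnr : ¬ (r + (j : ℕ) < r) := by omega
    simp only [he, dif_neg hnr] at this
    apply Subtype.ext
    have hidx : (⟨r + (j : ℕ) - r, by omega⟩ : Fin (η - r)) = j := by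
      apply Fin.ext
      show r + (j : ℕ) - r = (j : ℕ)
      omega
    rwa [hidx] at this
  have hle := Nat.card_le_card_of_injective e hinj
  refine le_trans (le_of_eq ?_) hle
  rw [Nat.card_eq_fintype_card, Fintype.card_sigma]
  have hfiber : ∀ s : {s : Fin r → Fqm // LinearIndependent Fq s},
      Fintype.card (Fin (η - r) → S s) = (Fintype.card Fq ^ r) ^ (η - r) := by
    intro s
    rw [Fintype.card_fun, Fintype.card_fin]
    congr 1
    rw [Module.card_eq_pow_finrank (K := Fq) (V := S s)]
    congr 1
    simpa [S] using finrank_span_eq_card s.2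
  have hLI : Fintype.card {s : Fin r → Fqm // LinearIndependent Fq s} =
      ∏ i ∈ Finset.range r, (Fintype.card Fq ^ m - Fintype.card Fq ^ i) := by
    rw [← Nat.card_eq_fintype_card, card_linearIndependent (K := Fq) (hfr ▸ hrm), hfr]
    exact Fin.prod_univ_eq_prod_range (fun i => Fintype.card Fq ^ m - Fintype.card Fq ^ i) r
  rw [Finset.sum_congr rfl (fun s _ => hfiber s), Finset.sum_const, Finset.card_univ,
    smul_eq_mul, hLI]

end count




section count2
variable {Fq Fqm : Type} [Field Fq] [Fintype Fq] [Field Fqm] [Fintype Fqm] [Algebra Fq Fqm]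

lemma prodB (ℓ η : ℕ) (T : Fin ℓ → ℕ) :
    (∏ i, Nat.card {v : Fin η → Fqm // rkw Fq v = T i}) ≤ VolS Fq Fqm ℓ η (∑ i, T i) := by
  classical
  set e : (∀ i : Fin ℓ, {v : Fin η → Fqm // rkw Fq v = T i}) →
      {x : Fin ℓ → Fin η → Fqm // srw Fq x = ∑ i, T i} :=
    fun p => ⟨fun i => (p i).val, by
      simp only [srw]
      exact Finset.sum_congr rfl (fun i _ => (p i).2)⟩ with he
  have hinj : Function.Injective e := by
    intro p p' h
    funext i
    exact Subtype.ext (congrFun (congrArg Subtype.val h) i)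
  have := Nat.card_le_card_of_injective e hinj
  rwa [Nat.card_pi] at this

lemma VolS_le_VolB (ℓ η t : ℕ) : VolS Fq Fqm ℓ η t ≤ VolB Fq Fqm ℓ η t := by
  exact Nat.card_le_card_of_injective
    (fun x => ⟨x.val, le_of_eq x.2⟩ : {x : Fin ℓ → Fin η → Fqm // srw Fq x = t} →
      {x : Fin ℓ → Fin η → Fqm // srw Fq x ≤ t})
    (fun a b h => Subtype.ext (congrArg Subtype.val h : _))

end count2

lemma blockReal (q m η r : ℕ) (hq2 : 2 ≤ q) (hrm : r ≤ m) (hrη : r ≤ η) :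
    (q : ℝ) ^ (r * (m + η - r)) * (gammaq q)⁻¹ ≤
      (((∏ i ∈ Finset.range r, (q ^ m - q ^ i)) * (q ^ r) ^ (η - r) : ℕ) : ℝ) := by
  have hq0 : (0:ℝ) < q := by positivity
  have hγ := gamma_pos hq2
  have hfac : ∀ i ∈ Finset.range r, ((q ^ m - q ^ i : ℕ) : ℝ) =
      (q : ℝ) ^ m * (1 - (q : ℝ)⁻¹ ^ (m - i)) := by
    intro i hi
    simp only [Finset.mem_range] at hi
    rw [Nat.cast_sub (Nat.pow_le_pow_right (by omega) (by omega))]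
    push_cast
    have h1 : (q : ℝ) ^ m * (q : ℝ)⁻¹ ^ (m - i) = (q : ℝ) ^ i := by
      rw [inv_pow, ← pow_sub₀ _ (ne_of_gt hq0) (by omega)]
      congr 1
      omega
    rw [mul_sub, mul_one, h1]
  rw [Nat.cast_mul, Nat.cast_prod, Nat.cast_pow, Nat.cast_pow,
    Finset.prod_congr rfl hfac, Finset.prod_mul_distrib, Finset.prod_const,
    Finset.card_range, ← pow_mul, ← pow_mul]
  set P := ∏ i ∈ Finset.range r, (1 - (q : ℝ)⁻¹ ^ (m - i)) with hP
  have hPpos : 0 < P := by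
    apply Finset.prod_pos
    intro i hi
    simp only [Finset.mem_range] at hi
    have := xq_mem hq2 (m - i - 1)
    have hmi : m - i - 1 + 1 = m - i := by omega
    rw [hmi] at this
    exact this.1
  have hPinv : P⁻¹ ≤ gammaq q := by
    rw [hP, ← Finset.prod_inv_distrib]
    exact gamma_ge hq2 hrm
  have hγP : (gammaq q)⁻¹ ≤ P := by
    rw [← inv_inv P]
    exact inv_anti₀ (by positivity) hPinv
  have hexp : r * (m + η - r) = m * r + r * (η - r) := by
    have h1 : m + η - r = m + (η - r) := by omega
    rw [h1, Nat.mul_add, Nat.mul_comm r m]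
  rw [hexp, pow_add]
  calc (q:ℝ) ^ (m*r) * (q:ℝ) ^ (r*(η-r)) * (gammaq q)⁻¹
      ≤ (q:ℝ) ^ (m*r) * (q:ℝ) ^ (r*(η-r)) * P := by
        apply mul_le_mul_of_nonneg_left hγP (by positivity)
    _ = (q:ℝ) ^ (m*r) * P * (q:ℝ) ^ (r*(η-r)) := by ring

lemma sum_ite_lt (ℓ s c d : ℕ) (hs : s ≤ ℓ) :
    ∑ j ∈ Finset.range ℓ, (if j < s then c else d) = s * c + (ℓ - s) * d := by
  classical
  rw [Finset.sum_ite]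
  have h1 : (Finset.range ℓ).filter (fun j => j < s) = Finset.range s := by
    ext j; simp only [Finset.mem_filter, Finset.mem_range]; omega
  have h2 : ((Finset.range ℓ).filter (fun j => ¬ j < s)).card = ℓ - s := by
    have h3 : (Finset.range ℓ).filter (fun j => ¬ j < s) = Finset.Ico s ℓ := by
      ext j; simp only [Finset.mem_filter, Finset.mem_range, Finset.mem_Ico]; omega
    rw [h3, Nat.card_Ico]
  rw [h1, Finset.sum_const, Finset.sum_const, Finset.card_range, h2, smul_eq_mul, smul_eq_mul]

set_option maxHeartbeats 1000000 in
theorem stmt7 (q m ℓ η t : ℕ) (Fq Fqm : Type) [Field Fq] [Fintype Fq] [Field Fqm]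
    [Fintype Fqm] [Algebra Fq Fqm] (hq : Fintype.card Fq = q)
    (hqm : Fintype.card Fqm = q ^ m) (hℓ : 0 < ℓ) (hη : 0 < η) (hm : 0 < m)
    (ht : t ≤ ℓ * min m η) :
    (q : ℝ) ^ ((((m : ℝ) + η) - (t : ℝ) / ℓ) * t - (ℓ : ℝ) / 4) * ((gammaq q) ^ ℓ)⁻¹ ≤
        (VolS Fq Fqm ℓ η t : ℝ) ∧
      (q : ℝ) ^ ((((m : ℝ) + η) - (t : ℝ) / ℓ) * t - (ℓ : ℝ) / 4) * ((gammaq q) ^ ℓ)⁻¹ ≤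
        (VolB Fq Fqm ℓ η t : ℝ) := by
  classical
  have hq2 : 2 ≤ q := by rw [← hq]; exact Fintype.one_lt_card
  have hq0 : (0:ℝ) < q := by positivity
  have hq1 : (1:ℝ) ≤ q := by exact_mod_cast (by omega : 1 ≤ q)
  have hγ := gamma_pos hq2
  have hfr : Module.finrank Fq Fqm = m := by
    have hcard := Module.card_eq_pow_finrank (K := Fq) (V := Fqm)
    rw [hq, hqm] at hcard
    exact Nat.pow_right_injective hq2 hcard.symm
  set a := t / ℓ with hadef
  set s := t % ℓ with hsdef
  have hdm : ℓ * a + s = t := Nat.div_add_mod t ℓ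
  have hsl : s < ℓ := Nat.mod_lt t hℓ
  have ha : a ≤ min m η := by
    have h1 := Nat.div_le_div_right (c := ℓ) ht
    rwa [Nat.mul_div_cancel_left _ hℓ] at h1
  have ha2 : 0 < s → a + 1 ≤ min m η := by
    intro hs0
    by_contra hcon
    have h1 : min m η ≤ a := by omega
    have h2 : ℓ * min m η ≤ ℓ * a := Nat.mul_le_mul_left ℓ h1
    omega
  set T : Fin ℓ → ℕ := fun i => if (i : ℕ) < s then a + 1 else a with hT
  have hTμ : ∀ i, T i ≤ min m η := by
    intro i
    rw [hT]
    dsimp only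
    split
    · exact ha2 (by omega)
    · exact ha
  have hTm : ∀ i, T i ≤ m := fun i => le_trans (hTμ i) (min_le_left _ _)
  have hTη : ∀ i, T i ≤ η := fun i => le_trans (hTμ i) (min_le_right _ _)
  have hsum : ∑ i, T i = t := by
    rw [hT, Fin.sum_univ_eq_sum_range (fun j => if j < s then a + 1 else a) ℓ,
      sum_ite_lt ℓ s _ _ (le_of_lt hsl)]
    have e2 : (ℓ-s)*a = ℓ*a - s*a := Nat.sub_mul _ _ _
    have e1 : s*(a+1) = s*a + s := by ring
    have e3 : s*a ≤ ℓ*a := Nat.mul_le_mul_right a (le_of_lt hsl)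
    omega
  have hsum2 : ∑ i, (T i)^2 = s*(a+1)^2 + (ℓ-s)*a^2 := by
    have hsq : ∀ j : ℕ, (if j < s then a + 1 else a)^2 = if j < s then (a+1)^2 else a^2 := by
      intro j; split <;> rfl
    rw [hT]
    dsimp only
    rw [Fin.sum_univ_eq_sum_range (fun j => (if j < s then a + 1 else a)^2) ℓ,
      Finset.sum_congr rfl (fun j _ => hsq j), sum_ite_lt ℓ s _ _ (le_of_lt hsl)]
  -- combinatorial chain
  have key1 : (∏ i, (Nat.card {v : Fin η → Fqm // rkw Fq v = T i} : ℝ)) ≤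
      (VolS Fq Fqm ℓ η t : ℝ) := by
    rw [← Nat.cast_prod]
    exact_mod_cast hsum ▸ prodB ℓ η T
  have key2 : ∀ i : Fin ℓ, (q:ℝ) ^ (T i * (m + η - T i)) * (gammaq q)⁻¹ ≤
      (Nat.card {v : Fin η → Fqm // rkw Fq v = T i} : ℝ) := by
    intro i
    refine le_trans (blockReal q m η (T i) hq2 (hTm i) (hTη i)) ?_
    have hA := blockA (Fq := Fq) (Fqm := Fqm) m η (T i) hfr (hTm i) (hTη i)
    rw [hq] at hA
    exact_mod_cast hA
  have key3 : (q:ℝ) ^ (∑ i, T i * (m + η - T i)) * ((gammaq q)^ℓ)⁻¹ ≤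
      (VolS Fq Fqm ℓ η t : ℝ) := by
    calc (q:ℝ) ^ (∑ i, T i * (m + η - T i)) * ((gammaq q)^ℓ)⁻¹
        = ∏ i : Fin ℓ, ((q:ℝ) ^ (T i * (m + η - T i)) * (gammaq q)⁻¹) := by
          rw [Finset.prod_mul_distrib, Finset.prod_pow_eq_pow_sum, Finset.prod_const,
            Finset.card_univ, Fintype.card_fin, inv_pow]
      _ ≤ ∏ i, (Nat.card {v : Fin η → Fqm // rkw Fq v = T i} : ℝ) :=
          Finset.prod_le_prod (fun i _ => by positivity) (fun i _ => key2 i)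
      _ ≤ (VolS Fq Fqm ℓ η t : ℝ) := key1
  -- exponent comparison
  have hE : (((m : ℝ) + η) - (t : ℝ) / ℓ) * t - (ℓ : ℝ) / 4 ≤
      ((∑ i, T i * (m + η - T i) : ℕ) : ℝ) := by
    have h1 : ∀ i : Fin ℓ, ((T i * (m + η - T i) : ℕ) : ℝ) =
        ((m:ℝ)+η) * (T i : ℝ) - (T i : ℝ)^2 := by
      intro i
      rw [Nat.cast_mul, Nat.cast_sub (le_trans (hTm i) (Nat.le_add_right m η))]
      push_cast
      ring
    rw [Nat.cast_sum, Finset.sum_congr rfl (fun i _ => h1 i), Finset.sum_sub_distrib,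
      ← Finset.mul_sum]
    have h2 : ∑ i, (T i : ℝ) = (t : ℝ) := by rw [← Nat.cast_sum, hsum]
    have h3 : ∑ i, (T i : ℝ)^2 = ((s:ℝ)*((a:ℝ)+1)^2 + ((ℓ:ℝ)-(s:ℝ))*(a:ℝ)^2) := by
      have h4 : ∑ i, (T i : ℝ)^2 = ((∑ i, (T i)^2 : ℕ) : ℝ) := by push_cast; rfl
      rw [h4, hsum2, Nat.cast_add, Nat.cast_mul, Nat.cast_mul,
        Nat.cast_sub (le_of_lt hsl)]
      push_cast
      ring
    rw [h2, h3]
    have htr : (ℓ:ℝ) * a + s = t := by exact_mod_cast hdm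
    have hlr : (0:ℝ) < ℓ := by exact_mod_cast hℓ
    have hsr : (s:ℝ) < ℓ := by exact_mod_cast hsl
    have hs0 : (0:ℝ) ≤ s := Nat.cast_nonneg s
    have ha0 : (0:ℝ) ≤ a := Nat.cast_nonneg a
    set u := (t:ℝ)/ℓ with hu
    have hut : u * ℓ = t := div_mul_cancel₀ _ (ne_of_gt hlr)
    have h5 : (ℓ:ℝ) * (u * t) = (t:ℝ) * t := by
      calc (ℓ:ℝ) * (u * t) = (u * ℓ) * t := by ring
        _ = (t:ℝ) * t := by rw [hut]
    have hkey : 0 ≤ (ℓ:ℝ) * ((u * t + (ℓ:ℝ)/4) -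
        ((s:ℝ)*((a:ℝ)+1)^2 + ((ℓ:ℝ)-(s:ℝ))*(a:ℝ)^2)) := by
      nlinarith [sq_nonneg ((ℓ:ℝ) - 2*s), h5, htr]
    have hkey2 := (mul_nonneg_iff_of_pos_left hlr).1 hkey
    linarith [hkey2]
  have main : (q : ℝ) ^ ((((m : ℝ) + η) - (t : ℝ) / ℓ) * t - (ℓ : ℝ) / 4) *
      ((gammaq q) ^ ℓ)⁻¹ ≤ (VolS Fq Fqm ℓ η t : ℝ) := by
    refine le_trans (mul_le_mul_of_nonneg_right ?_ (by positivity)) key3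
    calc (q:ℝ) ^ ((((m : ℝ) + η) - (t : ℝ) / ℓ) * t - (ℓ : ℝ) / 4)
        ≤ (q:ℝ) ^ (((∑ i, T i * (m + η - T i) : ℕ) : ℝ)) :=
          Real.rpow_le_rpow_of_exponent_le hq1 hE
      _ = (q:ℝ) ^ (∑ i, T i * (m + η - T i)) := Real.rpow_natCast _ _
  refine ⟨main, le_trans main ?_⟩
  exact_mod_cast VolS_le_VolB (Fq := Fq) (Fqm := Fqm) ℓ η t
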